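/- Let F : ℝⁿ → ℝⁿ be a polynomial map such that the Jacobian matrix DF(x) has rank n (equivalently, is invertible) at every point x ∈ ℝⁿ. Then the solution set Sol(ℝⁿ, F) of the unconstrained variational inequality, which equals the zero set {x ∈ ℝⁿ : F(x) = 0}, has finitely many points. -/

import Mathlib

/-- The Jacobian matrix of a map `F : ℝⁿ → ℝⁿ` at `x`. -/
noncomputable def jac {n : ℕ} (F : (Fin n → ℝ) → (Fin n → ℝ)) (x : Fin n → ℝ) :
    Matrix (Fin n) (Fin n) ℝ :=
  Matrix.of fun a b => fderiv ℝ (fun y => F y a) x (Pi.single b 1)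

open MvPolynomial

namespace UnconstrainedVI

variable {n : ℕ}

/-- The maximal ideal of polynomials "vanishing at `x`". -/
noncomputable def mIdeal (x : Fin n → ℝ) : Ideal (MvPolynomial (Fin n) ℝ) :=
  Ideal.span (Set.range fun j => X j - C (x j))

lemma mem_mIdeal_sub (x : Fin n → ℝ) (p : MvPolynomial (Fin n) ℝ) :
    p - C (eval x p) ∈ mIdeal x := by
  induction p using MvPolynomial.induction_on with
  | C a => simp
  | add p q hp hq =>
    have h := Ideal.add_mem _ hp hq
    have he : p + q - C (eval x (p + q)) = (p - C (eval x p)) + (q - C (eval x q)) := by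
      rw [map_add, map_add]; ring
    rwa [he]
  | mul_X p j hp =>
    have he : p * X j - C (eval x (p * X j))
        = (p - C (eval x p)) * X j + C (eval x p) * (X j - C (x j)) := by
      rw [map_mul, eval_X, map_mul]; ring
    rw [he]
    exact Ideal.add_mem _ (Ideal.mul_mem_right _ _ hp)
      (Ideal.mul_mem_left _ _ (Ideal.subset_span ⟨j, rfl⟩))

lemma mIdeal_eq_ker (x : Fin n → ℝ) :
    mIdeal x = RingHom.ker (eval x : MvPolynomial (Fin n) ℝ →+* ℝ) := by
  apply le_antisymm
  · rw [mIdeal, Ideal.span_le]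
    rintro _ ⟨j, rfl⟩
    simp [RingHom.mem_ker]
  · intro p hp
    have h := mem_mIdeal_sub x p
    rw [RingHom.mem_ker] at hp
    rwa [hp, map_zero, sub_zero] at h

lemma mIdeal_isPrime (x : Fin n → ℝ) : (mIdeal x).IsPrime := by
  rw [mIdeal_eq_ker]
  exact RingHom.ker_isPrime _

/-- First-order Taylor expansion: the remainder lies in the square of the maximal ideal. -/
lemma taylor_mem (x : Fin n → ℝ) (p : MvPolynomial (Fin n) ℝ) :
    p - C (eval x p) - ∑ j, C (eval x (pderiv j p)) * (X j - C (x j)) ∈ (mIdeal x) ^ 2 := by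
  induction p using MvPolynomial.induction_on with
  | C a => simp
  | add p q hp hq =>
    have h := Ideal.add_mem _ hp hq
    have he : p + q - C (eval x (p + q)) - ∑ j, C (eval x (pderiv j (p + q))) * (X j - C (x j))
        = (p - C (eval x p) - ∑ j, C (eval x (pderiv j p)) * (X j - C (x j)))
          + (q - C (eval x q) - ∑ j, C (eval x (pderiv j q)) * (X j - C (x j))) := by
      simp only [map_add, add_mul, Finset.sum_add_distrib]; ring
    rwa [he]
  | mul_X p j hp =>
    have hsum : ∑ i, C (eval x (pderiv i (p * X j))) * (X i - C (x i))
        = C (x j) * ∑ i, C (eval x (pderiv i p)) * (X i - C (x i))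
          + C (eval x p) * (X j - C (x j)) := by
      have hterm : ∀ i, C (eval x (pderiv i (p * X j))) * (X i - C (x i))
          = C (x j) * (C (eval x (pderiv i p)) * (X i - C (x i)))
            + (if i = j then C (eval x p) * (X j - C (x j)) else 0) := by
        intro i
        rw [pderiv_mul]
        by_cases h : i = j
        · subst h; simp [pderiv_X_self]; ring
        · simp [pderiv_X_of_ne h, h]; ring
      rw [Finset.sum_congr rfl (fun i _ => hterm i), Finset.sum_add_distrib,
        Finset.sum_ite_eq' Finset.univ j]
      simp [Finset.mul_sum]
    have he : p * X j - C (eval x (p * X j))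
          - ∑ i, C (eval x (pderiv i (p * X j))) * (X i - C (x i))
        = (p - C (eval x p)) * (X j - C (x j))
          + C (x j) * (p - C (eval x p) - ∑ i, C (eval x (pderiv i p)) * (X i - C (x i))) := by
      rw [hsum, map_mul, eval_X, map_mul]; ring
    rw [he, pow_two]
    exact Ideal.add_mem _ (Ideal.mul_mem_mul (mem_mIdeal_sub x p) (Ideal.subset_span ⟨j, rfl⟩))
      (Ideal.mul_mem_left _ _ (by rw [← pow_two]; exact hp))

/-- Nakayama-style argument: if every generator of `mIdeal x` lies in `I + (mIdeal x)²`,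
then `mIdeal x` is a minimal prime over `I`. -/
lemma mIdeal_mem_minimalPrimes (x : Fin n → ℝ) (I : Ideal (MvPolynomial (Fin n) ℝ))
    (hI : I ≤ mIdeal x) (hkey : ∀ j, X j - C (x j) ∈ I ⊔ (mIdeal x) ^ 2) :
    mIdeal x ∈ I.minimalPrimes := by
  set R := MvPolynomial (Fin n) ℝ
  set π := Ideal.Quotient.mk I
  set mA : Ideal (R ⧸ I) := (mIdeal x).map π with hmA
  have hm_le : mIdeal x ≤ I ⊔ (mIdeal x) ^ 2 := by
    rw [mIdeal, Ideal.span_le]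
    rintro _ ⟨j, rfl⟩
    exact hkey j
  have hle : mA ≤ mA • mA := by
    have h1 : mA ≤ (I ⊔ (mIdeal x) ^ 2).map π := Ideal.map_mono hm_le
    rw [Ideal.map_sup, Ideal.map_quotient_self, bot_sup_eq, Ideal.map_pow] at h1
    rw [smul_eq_mul]
    exact h1.trans_eq (by rw [Submodule.pow_succ, Submodule.pow_one])
  have hfg : mA.FG := Ideal.FG.map (Submodule.fg_span (Set.finite_range _)) π
  obtain ⟨r, hr1, hr2⟩ :=
    Submodule.exists_sub_one_mem_and_smul_eq_zero_of_fg_of_le_smul mA mA hfg hle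
  obtain ⟨r', rfl⟩ := Ideal.Quotient.mk_surjective r
  refine ⟨⟨mIdeal_isPrime x, hI⟩, ?_⟩
  rintro q ⟨hq_prime, hq_I⟩ hq_le
  by_cases hr' : r' ∈ q
  · exfalso
    have h1 : π r' - 1 ∈ mA := hr1
    have h2 : π (r' - 1) ∈ mA := by rwa [map_sub, map_one]
    obtain ⟨s, hs, hsπ⟩ := Ideal.mem_map_iff_of_surjective π Ideal.Quotient.mk_surjective |>.mp h2
    have h3 : r' - 1 - s ∈ I := by
      rw [← Ideal.mk_ker (I := I), RingHom.mem_ker, map_sub, hsπ, sub_self]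
    have h4 : r' - 1 ∈ mIdeal x := by
      have := Ideal.add_mem _ hs (hI h3)
      simpa using this
    have h5 : r' ∈ mIdeal x := hq_le hr'
    have h6 : (1 : R) ∈ mIdeal x := by
      have := Ideal.sub_mem _ h5 h4
      simpa using this
    exact (mIdeal_isPrime x).ne_top ((Ideal.eq_top_iff_one _).mpr h6)
  · rw [mIdeal, Ideal.span_le]
    rintro _ ⟨j, rfl⟩
    have hgen : π (X j - C (x j)) ∈ mA :=
      Ideal.mem_map_of_mem π (Ideal.subset_span ⟨j, rfl⟩)
    have h0 : π r' • π (X j - C (x j)) = 0 := hr2 _ hgen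
    rw [smul_eq_mul, ← map_mul] at h0
    have h1 : r' * (X j - C (x j)) ∈ I := by
      rwa [← Ideal.mk_ker (I := I), RingHom.mem_ker]
    exact (hq_prime.mem_or_mem (hq_I h1)).resolve_left hr'

lemma hasFDerivAt_eval (p : MvPolynomial (Fin n) ℝ) (x : Fin n → ℝ) :
    HasFDerivAt (fun y : Fin n → ℝ => eval y p)
      (∑ j, eval x (pderiv j p) • (ContinuousLinearMap.proj j : (Fin n → ℝ) →L[ℝ] ℝ)) x := by
  induction p using MvPolynomial.induction_on with
  | C a =>
    simp only [eval_C, pderiv_C, map_zero, zero_smul, Finset.sum_const_zero]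
    exact hasFDerivAt_const a x
  | add p q hp hq =>
    have h := hp.add hq
    simp only [map_add, add_smul, Finset.sum_add_distrib]
    exact h
  | mul_X p j hp =>
    have hj : HasFDerivAt (fun y : Fin n → ℝ => y j)
        (ContinuousLinearMap.proj j : (Fin n → ℝ) →L[ℝ] ℝ) x :=
      hasFDerivAt_apply j x
    have h := hp.mul hj
    have heq : (∑ i, eval x (pderiv i (p * X j)) •
          (ContinuousLinearMap.proj i : (Fin n → ℝ) →L[ℝ] ℝ))
        = eval x p • (ContinuousLinearMap.proj j : (Fin n → ℝ) →L[ℝ] ℝ)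
          + x j • ∑ i, eval x (pderiv i p) • (ContinuousLinearMap.proj i : (Fin n → ℝ) →L[ℝ] ℝ) := by
      ext v
      simp only [ContinuousLinearMap.sum_apply, ContinuousLinearMap.smul_apply,
        ContinuousLinearMap.add_apply, ContinuousLinearMap.proj_apply, smul_eq_mul,
        Finset.mul_sum]
      have hterm : ∀ i, eval x (pderiv i (p * X j)) * v i
          = x j * (eval x (pderiv i p) * v i) + (if i = j then eval x p * v j else 0) := by
        intro i; rw [pderiv_mul]
        by_cases hij : i = j
        · subst hij; simp [pderiv_X_self]; ring
        · simp [pderiv_X_of_ne hij, hij]; ring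
      rw [Finset.sum_congr rfl fun i _ => hterm i, Finset.sum_add_distrib,
        Finset.sum_ite_eq' Finset.univ j]
      simp [add_comm]
    have hfun : (fun y : Fin n → ℝ => eval y (p * X j)) = fun y => eval y p * y j := by
      funext y; simp
    rw [hfun, heq]
    exact h

lemma jac_apply_eq (F : (Fin n → ℝ) → (Fin n → ℝ)) (P : Fin n → MvPolynomial (Fin n) ℝ)
    (hP : ∀ a x', F x' a = eval x' (P a)) (x : Fin n → ℝ) (a b : Fin n) :
    jac F x a b = eval x (pderiv b (P a)) := by
  have hfun : (fun y => F y a) = fun y => eval y (P a) := funext fun y => hP a y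
  have hd := hasFDerivAt_eval (P a) x
  show fderiv ℝ (fun y => F y a) x (Pi.single b 1) = _
  rw [hfun, hd.fderiv]
  simp only [ContinuousLinearMap.sum_apply, ContinuousLinearMap.smul_apply,
    ContinuousLinearMap.proj_apply, smul_eq_mul, Pi.single_apply]
  rw [Finset.sum_congr rfl fun i _ => by rw [mul_ite, mul_one, mul_zero]]
  rw [Finset.sum_ite_eq' Finset.univ b]
  simp

lemma isUnit_of_rank_eq (A : Matrix (Fin n) (Fin n) ℝ) (h : A.rank = n) : IsUnit A := by
  rw [← Matrix.mulVec_injective_iff_isUnit]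
  have htop : LinearMap.range A.mulVecLin = ⊤ := by
    apply Submodule.eq_top_of_finrank_eq
    rw [← Matrix.rank, h, Module.finrank_pi]
    simp
  have hsurj : Function.Surjective A.mulVecLin := LinearMap.range_eq_top.mp htop
  have hinj : Function.Injective A.mulVecLin :=
    (LinearMap.injective_iff_surjective).mpr hsurj
  rwa [Matrix.coe_mulVecLin] at hinj

end UnconstrainedVI

open UnconstrainedVI in
/-- Let `F : ℝⁿ → ℝⁿ` be a polynomial map whose Jacobian `DF(x)` has
rank `n` at every `x`.  Then the solution set `Sol(ℝⁿ, F)` of the unconstrained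
variational inequality, which equals the zero set `{x : F x = 0}`, is finite. -/
theorem unconstrained_solution_set_finite {n : ℕ}
    (F : (Fin n → ℝ) → (Fin n → ℝ))
    (hFpoly : ∀ i, ∃ P : MvPolynomial (Fin n) ℝ, ∀ x, F x i = MvPolynomial.eval x P)
    (hrank : ∀ x, (jac F x).rank = n) :
    {x : Fin n → ℝ | ∀ y : Fin n → ℝ, 0 ≤ ∑ i, F x i * (y i - x i)} =
      {x : Fin n → ℝ | F x = 0} ∧
    Set.Finite {x : Fin n → ℝ | ∀ y : Fin n → ℝ, 0 ≤ ∑ i, F x i * (y i - x i)} := by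
  have hset : {x : Fin n → ℝ | ∀ y : Fin n → ℝ, 0 ≤ ∑ i, F x i * (y i - x i)} =
      {x : Fin n → ℝ | F x = 0} := by
    ext x
    simp only [Set.mem_setOf_eq]
    constructor
    · intro h
      have hsum : ∑ i, F x i * F x i ≤ 0 := by
        have h1 := h (fun i => x i - F x i)
        have e : ∀ i, F x i * ((fun i => x i - F x i) i - x i) = -(F x i * F x i) :=
          fun i => by show F x i * ((x i - F x i) - x i) = -(F x i * F x i); ring
        rw [Finset.sum_congr rfl fun i _ => e i, Finset.sum_neg_distrib] at h1
        linarith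
      have hz : ∑ i, F x i * F x i = 0 :=
        le_antisymm hsum (Finset.sum_nonneg fun i _ => mul_self_nonneg _)
      funext i
      exact mul_self_eq_zero.mp
        ((Finset.sum_eq_zero_iff_of_nonneg fun i _ => mul_self_nonneg (F x i)).mp hz i
          (Finset.mem_univ i))
    · intro h y
      have hz : ∀ i, F x i = 0 := fun i => congrFun h i
      simp [hz]
  refine ⟨hset, ?_⟩
  rw [hset]
  choose P hP using hFpoly
  set I : Ideal (MvPolynomial (Fin n) ℝ) := Ideal.span (Set.range P) with hIdef
  have hmin : ∀ x ∈ {x : Fin n → ℝ | F x = 0}, mIdeal x ∈ I.minimalPrimes := by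
    intro x hx
    have hx0 : ∀ a, eval x (P a) = 0 := fun a => by
      rw [← hP a x]; exact congrFun hx a
    have hI_le : I ≤ mIdeal x := by
      rw [hIdef, Ideal.span_le]
      rintro _ ⟨a, rfl⟩
      rw [mIdeal_eq_ker]
      exact RingHom.mem_ker.mpr (hx0 a)
    apply mIdeal_mem_minimalPrimes x I hI_le
    -- the key step, using invertibility of the Jacobian
    obtain ⟨u, hu⟩ := isUnit_of_rank_eq (jac F x) (hrank x)
    set B : Matrix (Fin n) (Fin n) ℝ := ↑u⁻¹ with hBdef
    have hBJ : B * jac F x = 1 := by rw [hBdef, ← hu]; exact u.inv_mul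
    intro j
    have hA : (∑ a, C (B j a) * P a) ∈ I :=
      Ideal.sum_mem _ fun a _ => Ideal.mul_mem_left _ _ (Ideal.subset_span ⟨a, rfl⟩)
    have hB2 : (∑ a, C (B j a) * (P a - ∑ b, C ((jac F x) a b) * (X b - C (x b))))
        ∈ (mIdeal x) ^ 2 := by
      refine Ideal.sum_mem _ fun a _ => Ideal.mul_mem_left _ _ ?_
      have ht := taylor_mem x (P a)
      rw [hx0 a, map_zero, sub_zero] at ht
      have he : ∀ b, (C (eval x (pderiv b (P a))) : MvPolynomial (Fin n) ℝ)
          = C ((jac F x) a b) := fun b => by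
        rw [jac_apply_eq F P (fun a x' => hP a x') x a b]
      have heq2 : P a - ∑ b, C ((jac F x) a b) * (X b - C (x b))
          = P a - ∑ b, C (eval x (pderiv b (P a))) * (X b - C (x b)) := by
        simp only [he]
      rw [heq2]
      exact ht
    have hident : X j - C (x j)
        = (∑ a, C (B j a) * P a)
          - ∑ a, C (B j a) * (P a - ∑ b, C ((jac F x) a b) * (X b - C (x b))) := by
      rw [← Finset.sum_sub_distrib]
      have e1 : ∀ a, C (B j a) * P a
            - C (B j a) * (P a - ∑ b, C ((jac F x) a b) * (X b - C (x b)))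
          = ∑ b, C (B j a) * (C ((jac F x) a b) * (X b - C (x b))) := by
        intro a; rw [mul_sub, Finset.mul_sum]; ring
      rw [Finset.sum_congr rfl fun a _ => e1 a, Finset.sum_comm]
      have e2 : ∀ b, (∑ a, C (B j a) * (C ((jac F x) a b) * (X b - C (x b))))
          = C ((B * jac F x) j b) * (X b - C (x b)) := by
        intro b
        rw [Matrix.mul_apply, map_sum, Finset.sum_mul]
        exact Finset.sum_congr rfl fun a _ => by rw [map_mul, mul_assoc]
      rw [Finset.sum_congr rfl fun b _ => e2 b, hBJ]
      have e3 : ∀ b, C ((1 : Matrix (Fin n) (Fin n) ℝ) j b) * (X b - C (x b))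
          = if j = b then X b - C (x b) else 0 := by
        intro b
        rw [Matrix.one_apply]
        split <;> simp
      rw [Finset.sum_congr rfl fun b _ => e3 b, Finset.sum_ite_eq Finset.univ j]
      simp
    rw [hident]
    exact Submodule.sub_mem _ (Ideal.mem_sup_left hA) (Ideal.mem_sup_right hB2)
  have hfin : I.minimalPrimes.Finite := by
    rw [Ideal.minimalPrimes_eq_comap]
    exact (minimalPrimes.finite_of_isNoetherianRing _).image _
  apply Set.Finite.of_finite_image (f := fun x => mIdeal x)
  · refine hfin.subset ?_
    rintro _ ⟨x, hx, rfl⟩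
    exact hmin x hx
  · intro x hx x' hx' hxx
    funext j
    have hxx' : mIdeal x = mIdeal x' := hxx
    have h1 : X j - C (x j) ∈ mIdeal x' := by
      rw [← hxx']
      exact Ideal.subset_span ⟨j, rfl⟩
    rw [mIdeal_eq_ker, RingHom.mem_ker] at h1
    simp only [map_sub, eval_X, eval_C] at h1
    linarith [sub_eq_zero.mp h1]
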